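/- Let $A$ be a totally unimodular $m \times d$ integer matrix, let $b \in \mathbb{Z}^m$, and let $n$ be a positive integer. Then there exist $x^1, \dots, x^n \in \{0,1\}^d$ with $A x^k = b$ for all $k$ if and only if there exist $y^1, \dots, y^n \in \{0,1\}^d$ with $A \sum_{k=1}^n y^k = n \cdot b$. -/

import Mathlib

open Matrix in
lemma sum_orderIsoOfFin {α : Type*} [AddCommMonoid α] {d : ℕ} (F : Finset (Fin d)) (h : Fin d → α) :
    ∑ j ∈ F, h j = ∑ l : Fin (F.card), h ((F.orderIsoOfFin rfl l : Fin d)) := by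
  rw [← Finset.sum_coe_sort F h]
  exact (Equiv.sum_comp (F.orderIsoOfFin rfl).toEquiv (fun j => h (j : Fin d))).symm

open Matrix in
lemma exists_good_rows {m r : ℕ} (M : Matrix (Fin m) (Fin r) ℚ)
    (h : LinearIndependent ℚ (fun l => Mᵀ l)) :
    ∃ f : Fin r → Fin m, Function.Injective f ∧ IsUnit (M.submatrix f id) := by
  classical
  have hrankT : Mᵀ.rank = r := by
    have := h.rank_matrix
    simpa using (by exact this : Mᵀ.rank = Fintype.card (Fin r))
  have hrankM : M.rank = r := by
    rw [← Matrix.rank_transpose]; exact hrankT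
  have hspan : Submodule.span ℚ (Set.range (fun i => M i)) = ⊤ := by
    apply Submodule.eq_top_of_finrank_eq
    rw [show (fun i => M i) = M.row from rfl, ← Matrix.rank_eq_finrank_span_row, hrankM]
    simp [Module.finrank_pi]
  obtain ⟨bs, hbs_sub, hbs_span, hbs_ind⟩ :=
    exists_linearIndependent ℚ (Set.range (fun i => M i))
  rw [hspan] at hbs_span
  have hbs_fin : bs.Finite := (Set.finite_range _).subset hbs_sub
  haveI : Fintype bs := hbs_fin.fintype
  have hcard : Fintype.card bs = r := by
    have h1 := finrank_span_set_eq_card hbs_ind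
    rw [hbs_span] at h1
    have : Module.finrank ℚ (⊤ : Submodule ℚ (Fin r → ℚ)) = r := by
      simp [Module.finrank_pi]
    rw [this] at h1
    exact (Set.toFinset_card bs).symm.trans h1.symm
  let u : Fin r ≃ bs := (Fintype.equivFinOfCardEq hcard).symm
  have hex : ∀ w : bs, ∃ i, M i = (w : Fin r → ℚ) := fun w => hbs_sub w.2
  choose ρ hρ using hex
  refine ⟨fun l => ρ (u l), ?_, ?_⟩
  · intro l l' hll
    simp only at hll
    apply u.injective
    apply Subtype.ext
    rw [← hρ (u l), ← hρ (u l'), hll]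
  · rw [← Matrix.linearIndependent_rows_iff_isUnit]
    have : (fun i => (M.submatrix (fun l => ρ (u l)) id) i) = fun l => ((u l : Fin r → ℚ)) := by
      funext l
      ext l'
      simp [Matrix.submatrix, hρ (u l)]
    rw [show (M.submatrix (fun l => ρ (u l)) id).row = _ from this]
    exact hbs_ind.comp (fun l => u l) u.injective

open Matrix in
lemma integral_solution {r : ℕ} (Sz : Matrix (Fin r) (Fin r) ℤ) (hdet : IsUnit Sz.det)
    (xF : Fin r → ℚ) (cz : Fin r → ℤ)
    (hx : (Sz.map (Int.cast : ℤ → ℚ)).mulVec xF = fun l => (cz l : ℚ)) :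
    ∀ l', ∃ k : ℤ, xF l' = (k : ℚ) := by
  classical
  have h1 : ((Sz⁻¹).map (Int.cast : ℤ → ℚ)) * (Sz.map (Int.cast : ℤ → ℚ)) = 1 := by
    have e : (Int.cast : ℤ → ℚ) = ⇑(Int.castRingHom ℚ) := rfl
    rw [e, ← Matrix.map_mul, Matrix.nonsing_inv_mul _ hdet]
    exact Matrix.map_one _ Int.cast_zero Int.cast_one
  have h2 : xF = ((Sz⁻¹).map (Int.cast : ℤ → ℚ)).mulVec (fun l => (cz l : ℚ)) := by
    rw [← hx, Matrix.mulVec_mulVec, h1, Matrix.one_mulVec]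
  intro l'
  refine ⟨∑ l, (Sz⁻¹) l' l * cz l, ?_⟩
  rw [h2]
  simp [Matrix.mulVec, dotProduct]

open Matrix in
lemma tu_exists_binary_solution {m d : ℕ} {A : Matrix (Fin m) (Fin d) ℤ}
    (hA : A.IsTotallyUnimodular) {b : Fin m → ℤ} {x0 : Fin d → ℚ}
    (hx0A : (A.map (Int.cast : ℤ → ℚ)).mulVec x0 = fun i => (b i : ℚ))
    (hx00 : ∀ j, 0 ≤ x0 j) (hx01 : ∀ j, x0 j ≤ 1) :
    ∃ z : Fin d → ℤ, (∀ j, z j = 0 ∨ z j = 1) ∧ A.mulVec z = b := by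
  classical
  set Aq := A.map (Int.cast : ℤ → ℚ) with hAqdef
  have hrow : ∀ (v : Fin d → ℚ) (i : Fin m), Aq.mulVec v i = ∑ j, (A i j : ℚ) * v j := by
    intro v i
    simp [hAqdef, Matrix.mulVec, dotProduct, Matrix.map_apply]
  set Sol : (Fin d → ℚ) → Prop :=
    fun x => Aq.mulVec x = (fun i => (b i : ℚ)) ∧ (∀ j, 0 ≤ x j) ∧ (∀ j, x j ≤ 1) with hSoldef
  set fr : (Fin d → ℚ) → Finset (Fin d) :=
    fun x => Finset.univ.filter (fun j => ¬ ∃ k : ℤ, x j = (k : ℚ)) with hfrdef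
  set counts : Set ℕ := {c | ∃ x, Sol x ∧ (fr x).card = c} with hcountsdef
  have hne : counts.Nonempty := ⟨(fr x0).card, x0, ⟨hx0A, hx00, hx01⟩, rfl⟩
  obtain ⟨x, hxSol, hxcard⟩ : ∃ x, Sol x ∧ (fr x).card = sInf counts := Nat.sInf_mem hne
  have hfr_mem : ∀ (y : Fin d → ℚ) j, j ∈ fr y ↔ ¬ ∃ k : ℤ, y j = (k : ℚ) := by
    intro y j; simp [hfrdef]
  by_cases hF : (fr x).Nonempty
  · exfalso
    set F := fr x with hFdef
    set r := F.card with hrdef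
    set e := F.orderIsoOfFin rfl with hedef
    set g : Fin r → Fin d := fun l => (e l : Fin d) with hgdef
    have hg_inj : Function.Injective g := by
      intro a a' haa
      exact e.injective (Subtype.ext haa)
    have hgF : ∀ l, g l ∈ F := fun l => (e l).2
    have hsum_g : ∀ (h : Fin d → ℚ), ∑ j ∈ F, h j = ∑ l, h (g l) := by
      intro h; exact sum_orderIsoOfFin F h
    have hint : ∀ j, j ∉ F → ∃ k : ℤ, x j = (k : ℚ) := by
      intro j hj
      by_contra hc
      exact hj ((hfr_mem x j).mpr hc)
    have hxo : ∀ j, j ∈ F → 0 < x j ∧ x j < 1 := by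
      intro j hj
      have hj' : ¬ ∃ k : ℤ, x j = (k : ℚ) := (hfr_mem x j).mp hj
      constructor
      · rcases lt_or_eq_of_le (hxSol.2.1 j) with h | h
        · exact h
        · exact absurd ⟨0, by simp [← h]⟩ hj'
      · rcases lt_or_eq_of_le (hxSol.2.2 j) with h | h
        · exact h
        · exact absurd ⟨1, by simp [h]⟩ hj'
    by_cases hli : LinearIndependent ℚ (fun l (i : Fin m) => (A i (g l) : ℚ))
    · -- independent columns: all coordinates of F integral, contradiction
      obtain ⟨f, hf_inj, hf_unit⟩ :=
        exists_good_rows (Matrix.of fun i l => (A i (g l) : ℚ)) (by exact hli)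
      set Sz := A.submatrix f g with hSzdef
      have hmapeq : Sz.map (Int.cast : ℤ → ℚ) =
          (Matrix.of fun i l => (A i (g l) : ℚ)).submatrix f id := by
        ext l l'; simp [hSzdef, Matrix.map_apply, Matrix.submatrix]
      have hdet_ne : Sz.det ≠ 0 := by
        intro h0
        have hq : (Sz.map (Int.cast : ℤ → ℚ)).det = 0 := by
          have e2 : Sz.map (Int.cast : ℤ → ℚ) = (Int.castRingHom ℚ).mapMatrix Sz := rfl
          rw [e2, ← RingHom.map_det, h0]
          simp
        rw [hmapeq] at hq
        have := hf_unit
        rw [Matrix.isUnit_iff_isUnit_det, isUnit_iff_ne_zero] at this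
        exact this hq
      have hdet_unit : IsUnit Sz.det := by
        obtain ⟨s, hs⟩ := hA r f g hf_inj hg_inj
        cases s with
        | zero => exact absurd hs.symm (by simpa using hdet_ne)
        | pos => rw [← hs]; simp
        | neg =>
            rw [← hs]
            simpa using (isUnit_one (M := ℤ)).neg
      -- integer values outside F
      set w : Fin d → ℤ := fun j =>
        if h : ∃ k : ℤ, x j = (k : ℚ) then h.choose else 0 with hwdef
      have hw : ∀ j, j ∉ F → (w j : ℚ) = x j := by
        intro j hj
        have h := hint j hj
        simp only [hwdef, dif_pos h]
        exact h.choose_spec.symm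
      set cz : Fin r → ℤ := fun l => b (f l) - ∑ j ∈ Fᶜ, A (f l) j * w j with hczdef
      have hmv : (Sz.map (Int.cast : ℤ → ℚ)).mulVec (fun l' => x (g l'))
          = fun l => (cz l : ℚ) := by
        funext l
        have hsplit := Finset.sum_add_sum_compl F (fun j => (A (f l) j : ℚ) * x j)
        have hb := congrFun hxSol.1 (f l)
        rw [hrow] at hb
        have hLHS : (Sz.map (Int.cast : ℤ → ℚ)).mulVec (fun l' => x (g l')) l
            = ∑ l', (A (f l) (g l') : ℚ) * x (g l') := by
          simp [hSzdef, Matrix.mulVec, dotProduct, Matrix.map_apply, Matrix.submatrix]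
        rw [hLHS, ← hsum_g (fun j => (A (f l) j : ℚ) * x j)]
        have hcast : (cz l : ℚ) = (b (f l) : ℚ) - ∑ j ∈ Fᶜ, (A (f l) j : ℚ) * (w j : ℚ) := by
          simp only [hczdef]
          push_cast
          ring
        rw [hcast]
        have hcompl : ∑ j ∈ Fᶜ, (A (f l) j : ℚ) * (w j : ℚ)
            = ∑ j ∈ Fᶜ, (A (f l) j : ℚ) * x j := by
          apply Finset.sum_congr rfl
          intro j hj
          rw [hw j (Finset.mem_compl.mp hj)]
        rw [hcompl]
        linarith [hsplit, hb]
      have hall := integral_solution Sz hdet_unit (fun l' => x (g l')) cz hmv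
      obtain ⟨j0, hj0⟩ := hF
      have hj0F : j0 ∈ F := hj0
      obtain ⟨k, hk⟩ := hall (e.symm ⟨j0, hj0F⟩)
      have hk' : x (g (e.symm ⟨j0, hj0F⟩)) = (k : ℚ) := hk
      have hgj : g (e.symm ⟨j0, hj0F⟩) = j0 := by
        simp [hgdef]
      rw [hgj] at hk'
      exact ((hfr_mem x j0).mp hj0F) ⟨k, hk'⟩
    · -- dependent columns: descent step
      rw [Fintype.not_linearIndependent_iff] at hli
      obtain ⟨gc, hgc_sum, l0, hl0⟩ := hli
      set c : Fin d → ℚ := fun j => if h : j ∈ F then gc (e.symm ⟨j, h⟩) else 0 with hcdef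
      have hcg : ∀ l, c (g l) = gc l := by
        intro l
        have hsub : (⟨g l, hgF l⟩ : F) = e l := Subtype.ext rfl
        simp [hcdef, hgF l, hsub]
      have hc_out : ∀ j, j ∉ F → c j = 0 := by
        intro j hj; simp [hcdef, hj]
      have hAc : Aq.mulVec c = 0 := by
        funext i
        rw [hrow]
        rw [← Finset.sum_add_sum_compl F (fun j => (A i j : ℚ) * c j)]
        have h2 : ∑ j ∈ Fᶜ, (A i j : ℚ) * c j = 0 := by
          apply Finset.sum_eq_zero
          intro j hj
          rw [hc_out j (Finset.mem_compl.mp hj)]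
          ring
        have h1 : ∑ j ∈ F, (A i j : ℚ) * c j = 0 := by
          rw [hsum_g (fun j => (A i j : ℚ) * c j)]
          have := congrFun hgc_sum i
          simp only [Finset.sum_apply, Pi.smul_apply, smul_eq_mul, Pi.zero_apply] at this
          simp only [hcg]
          calc ∑ l, (A i (g l) : ℚ) * gc l = ∑ l, gc l * (A i (g l) : ℚ) := by
                apply Finset.sum_congr rfl; intros; ring
            _ = 0 := this
        rw [h1, h2]
        simp
      set supp : Finset (Fin r) := Finset.univ.filter (fun l => gc l ≠ 0) with hsuppdef
      have hsupp : supp.Nonempty := ⟨l0, by simp [hsuppdef, hl0]⟩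
      set tval : Fin r → ℚ :=
        fun l => if 0 < gc l then (1 - x (g l)) / gc l else x (g l) / (-gc l) with htvaldef
      set t : ℚ := supp.inf' hsupp tval with htdef
      have ht_pos : 0 < t := by
        rw [htdef, Finset.lt_inf'_iff]
        intro l hl
        have hlne : gc l ≠ 0 := by simpa [hsuppdef] using hl
        have hx1 := hxo (g l) (hgF l)
        rcases lt_or_gt_of_ne hlne with hneg | hpos
        · rw [htvaldef]
          simp only [if_neg (not_lt.mpr hneg.le)]
          exact div_pos hx1.1 (by linarith)
        · rw [htvaldef]
          simp only [if_pos hpos]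
          exact div_pos (by linarith [hx1.2]) hpos
      have ht_le : ∀ l ∈ supp, t ≤ tval l := fun l hl => Finset.inf'_le tval hl
      obtain ⟨lm, hlm, hlmeq0⟩ := Finset.exists_mem_eq_inf' hsupp tval
      have hlmeq : t = tval lm := htdef.trans hlmeq0
      set x' : Fin d → ℚ := fun j => x j + t * c j with hx'def
      have hbound : ∀ j, 0 ≤ x' j ∧ x' j ≤ 1 := by
        intro j
        by_cases hj : j ∈ F
        · have hglj : g (e.symm ⟨j, hj⟩) = j := by simp [hgdef]
          set l := e.symm ⟨j, hj⟩ with hldef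
          have hcj : c j = gc l := by rw [← hglj, hcg]
          have hx1 := hxo j hj
          rcases lt_trichotomy (gc l) 0 with hneg | hzero | hpos
          · have hls : l ∈ supp := by simp [hsuppdef]; exact ne_of_lt hneg
            have := ht_le l hls
            rw [htvaldef] at this
            simp only [if_neg (not_lt.mpr hneg.le)] at this
            have h2 : t * (-gc l) ≤ x (g l) := by
              rw [← le_div_iff₀ (by linarith)] at *
              exact this
            rw [hglj] at h2
            constructor
            · rw [hx'def]; simp only []; rw [hcj]; nlinarith
            · rw [hx'def]; simp only []; rw [hcj]; nlinarith [ht_pos]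
          · rw [hx'def]; simp only []; rw [hcj, hzero]
            constructor <;> [linarith [hx1.1]; linarith [hx1.2]]
          · have hls : l ∈ supp := by simp [hsuppdef]; exact ne_of_gt hpos
            have := ht_le l hls
            rw [htvaldef] at this
            simp only [if_pos hpos] at this
            have h2 : t * gc l ≤ 1 - x (g l) := by
              rw [← le_div_iff₀ hpos] at *
              exact this
            rw [hglj] at h2
            constructor
            · rw [hx'def]; simp only []; rw [hcj]; nlinarith [ht_pos]
            · rw [hx'def]; simp only []; rw [hcj]; nlinarith
        · rw [hx'def]; simp only []; rw [hc_out j hj]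
          constructor
          · simpa using hxSol.2.1 j
          · simpa using hxSol.2.2 j
      have hx'Sol : Sol x' := by
        refine ⟨?_, fun j => (hbound j).1, fun j => (hbound j).2⟩
        have : x' = x + t • c := by
          funext j; simp [hx'def, Pi.add_apply, Pi.smul_apply, smul_eq_mul]
        rw [this, Matrix.mulVec_add, Matrix.mulVec_smul, hAc, smul_zero, add_zero]
        exact hxSol.1
      have hglm : x' (g lm) = 0 ∨ x' (g lm) = 1 := by
        have hlmne : gc lm ≠ 0 := by simpa [hsuppdef] using hlm
        have hclm : c (g lm) = gc lm := hcg lm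
        have hx1 := hxo (g lm) (hgF lm)
        rcases lt_or_gt_of_ne hlmne with hneg | hpos
        · left
          rw [hx'def]; simp only []
          rw [hclm, hlmeq, htvaldef]
          simp only [if_neg (not_lt.mpr hneg.le)]
          field_simp
          ring
        · right
          rw [hx'def]; simp only []
          rw [hclm, hlmeq, htvaldef]
          simp only [if_pos hpos]
          field_simp
          ring
      have hsubset : fr x' ⊆ F.erase (g lm) := by
        intro j hj
        have hj' : ¬ ∃ k : ℤ, x' j = (k : ℚ) := (hfr_mem x' j).mp hj
        have hjF : j ∈ F := by
          by_contra hn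
          obtain ⟨k, hk⟩ := hint j hn
          apply hj'
          refine ⟨k, ?_⟩
          rw [hx'def]; simp only []
          rw [hc_out j hn, hk]; ring
        refine Finset.mem_erase.mpr ⟨?_, hjF⟩
        intro heq
        apply hj'
        rcases hglm with h | h
        · exact ⟨0, by rw [heq, h]; simp⟩
        · exact ⟨1, by rw [heq, h]; simp⟩
      have hlt : (fr x').card < r := by
        calc (fr x').card ≤ (F.erase (g lm)).card := Finset.card_le_card hsubset
          _ < F.card := Finset.card_erase_lt_of_mem (hgF lm)
      have hle : sInf counts ≤ (fr x').card := Nat.sInf_le ⟨x', hx'Sol, rfl⟩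
      omega
  · -- no fractional coordinates: extract integer solution
    rw [Finset.not_nonempty_iff_eq_empty] at hF
    have hall : ∀ j, ∃ k : ℤ, x j = (k : ℚ) := by
      intro j
      by_contra hc
      have : j ∈ fr x := (hfr_mem x j).mpr hc
      rw [hF] at this
      exact absurd this (Finset.notMem_empty j)
    choose z hz using hall
    refine ⟨z, ?_, ?_⟩
    · intro j
      have h0 : (0 : ℚ) ≤ (z j : ℚ) := by rw [← hz j]; exact hxSol.2.1 j
      have h1 : ((z j : ℚ)) ≤ 1 := by rw [← hz j]; exact hxSol.2.2 j
      have h0' : (0 : ℤ) ≤ z j := by exact_mod_cast h0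
      have h1' : z j ≤ 1 := by exact_mod_cast h1
      omega
    · funext i
      have hb := congrFun hxSol.1 i
      rw [hrow] at hb
      have h2 : ((A.mulVec z i : ℤ) : ℚ) = ∑ j, (A i j : ℚ) * (z j : ℚ) := by
        simp only [Matrix.mulVec, dotProduct]
        push_cast
        rfl
      have h3 : ∑ j, (A i j : ℚ) * (z j : ℚ) = (b i : ℚ) := by
        rw [← hb]
        apply Finset.sum_congr rfl
        intro j _
        rw [hz j]
      exact_mod_cast h2.trans h3

/-- For a totally unimodular `m × d` integer matrix `A`, an integer vector `b`, and a
positive integer `n`: there are `x¹,…,xⁿ ∈ {0,1}^d` with `Axᵏ = b` for all `k` iff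
there are `y¹,…,yⁿ ∈ {0,1}^d` with `A(∑ₖ yᵏ) = n·b`. -/
theorem feasibility_iff (m d n : ℕ) (hn : 0 < n)
    (A : Matrix (Fin m) (Fin d) ℤ) (hA : A.IsTotallyUnimodular)
    (b : Fin m → ℤ) :
    (∃ x : Fin n → Fin d → ℤ,
        (∀ k j, x k j = 0 ∨ x k j = 1) ∧ ∀ k, A.mulVec (x k) = b) ↔
    (∃ y : Fin n → Fin d → ℤ,
        (∀ k j, y k j = 0 ∨ y k j = 1) ∧
        A.mulVec (fun j => ∑ k, y k j) = (n : ℤ) • b) := by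
  constructor
  · rintro ⟨x, hx01, hxA⟩
    refine ⟨x, hx01, ?_⟩
    funext i
    have hswap : A.mulVec (fun j => ∑ k, x k j) i = ∑ k, A.mulVec (x k) i := by
      simp only [Matrix.mulVec, dotProduct, Finset.mul_sum]
      rw [Finset.sum_comm]
    rw [hswap]
    simp [hxA, Finset.sum_const, Finset.card_univ, Fintype.card_fin, Pi.smul_apply,
      smul_eq_mul, nsmul_eq_mul]
  · rintro ⟨y, hy01, hyA⟩
    set z : Fin d → ℤ := fun j => ∑ k, y k j with hzdef
    have hz0 : ∀ j, 0 ≤ z j :=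
      fun j => Finset.sum_nonneg (fun k _ => by rcases hy01 k j with h | h <;> simp [h])
    have hzn : ∀ j, z j ≤ n := by
      intro j
      calc z j ≤ ∑ _k : Fin n, 1 :=
            Finset.sum_le_sum (fun k _ => by rcases hy01 k j with h | h <;> simp [h])
        _ = n := by simp
    have hnq : (0 : ℚ) < n := by exact_mod_cast hn
    have hA0 : (A.map (Int.cast : ℤ → ℚ)).mulVec (fun j => (z j : ℚ) / n)
        = fun i => (b i : ℚ) := by
      funext i
      have hb := congrFun hyA i
      have h1 : (A.map (Int.cast : ℤ → ℚ)).mulVec (fun j => (z j : ℚ) / n) i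
          = (∑ j, ((A i j * z j : ℤ) : ℚ)) / n := by
        simp only [Matrix.mulVec, dotProduct, Matrix.map_apply, Finset.sum_div]
        apply Finset.sum_congr rfl
        intro j _
        push_cast
        ring
      have h2 : (∑ j, ((A i j * z j : ℤ) : ℚ)) = ((A.mulVec z i : ℤ) : ℚ) := by
        simp only [Matrix.mulVec, dotProduct]
        push_cast
        rfl
      rw [h1, h2, hb]
      simp only [Pi.smul_apply, smul_eq_mul]
      push_cast
      field_simp
    have h0 : ∀ j, 0 ≤ (z j : ℚ) / n := by
      intro j
      apply div_nonneg _ hnq.le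
      exact_mod_cast hz0 j
    have h1 : ∀ j, (z j : ℚ) / n ≤ 1 := by
      intro j
      rw [div_le_one hnq]
      exact_mod_cast hzn j
    obtain ⟨zz, hzz01, hzzA⟩ := tu_exists_binary_solution hA hA0 h0 h1
    exact ⟨fun _ => zz, fun _ _ => hzz01 _, fun _ => hzzA⟩
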